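/- Let Q be a real symmetric positive definite p × p matrix, let P : ℝ^p → ℝ be convex, nonnegative, and positively homogeneous of degree one, i.e., P(c • v) = c * P(v) for all c ≥ 0 and all v ∈ ℝ^p, let λ ≥ 0 and a ∈ ℝ^p. Suppose v̂ ∈ ℝ^p is a global minimizer over ℝ^p of the generalized penalized regression objective g(v) = (1/2)(a − v)ᵀQ(a − v) + λ P(v), and suppose v̂ ≠ 0. Then v* = v̂ / sqrt(v̂ᵀQ v̂) is a global maximizer of f(v) = vᵀQ a − λ P(v) over {v ∈ ℝ^p : vᵀQ v ≤ 1}. -/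

import Mathlib

open Matrix

/-- the v-coordinate update of Proposition 2 part 2 (Generalized
RPLS). For symmetric positive definite `Q`, if `v̂ ≠ 0` globally minimizes the
generalized penalized regression objective `(1/2)(a − v)ᵀQ(a − v) + λP(v)`,
then `v* = v̂ / √(v̂ᵀQv̂)` globally maximizes `vᵀQa − λP(v)` over
`{v : vᵀQv ≤ 1}`. -/
theorem grpls_v_update {p : ℕ} (Q : Matrix (Fin p) (Fin p) ℝ)
    (hQ : Q.PosDef) (P : (Fin p → ℝ) → ℝ)
    (hconv : ConvexOn ℝ Set.univ P) (hnonneg : ∀ v, 0 ≤ P v)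
    (hhom : ∀ c : ℝ, 0 ≤ c → ∀ v, P (c • v) = c * P v)
    (lam : ℝ) (hlam : 0 ≤ lam) (a : Fin p → ℝ) (vhat : Fin p → ℝ)
    (hmin : ∀ v : Fin p → ℝ,
      (1 / 2) * ((a - vhat) ⬝ᵥ (Q *ᵥ (a - vhat))) + lam * P vhat ≤
        (1 / 2) * ((a - v) ⬝ᵥ (Q *ᵥ (a - v))) + lam * P v)
    (hne : vhat ≠ 0) :
    (((Real.sqrt (vhat ⬝ᵥ (Q *ᵥ vhat)))⁻¹ • vhat) ⬝ᵥ
        (Q *ᵥ ((Real.sqrt (vhat ⬝ᵥ (Q *ᵥ vhat)))⁻¹ • vhat))) ≤ 1 ∧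
    ∀ v : Fin p → ℝ, v ⬝ᵥ (Q *ᵥ v) ≤ 1 →
      v ⬝ᵥ (Q *ᵥ a) - lam * P v ≤
        ((Real.sqrt (vhat ⬝ᵥ (Q *ᵥ vhat)))⁻¹ • vhat) ⬝ᵥ (Q *ᵥ a) -
          lam * P ((Real.sqrt (vhat ⬝ᵥ (Q *ᵥ vhat)))⁻¹ • vhat) := by
  have hQt : Qᵀ = Q := by
    have h := hQ.isHermitian
    simpa [Matrix.IsHermitian, Matrix.conjTranspose_eq_transpose_of_trivial] using h
  -- symmetry of the bilinear form
  have hsym : ∀ x y : Fin p → ℝ, x ⬝ᵥ (Q *ᵥ y) = y ⬝ᵥ (Q *ᵥ x) := by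
    intro x y
    rw [dotProduct_mulVec, ← mulVec_transpose, hQt, dotProduct_comm]
  -- expansion of the quadratic form
  have hexp : ∀ v : Fin p → ℝ, (a - v) ⬝ᵥ (Q *ᵥ (a - v)) =
      a ⬝ᵥ (Q *ᵥ a) - 2 * (v ⬝ᵥ (Q *ᵥ a)) + v ⬝ᵥ (Q *ᵥ v) := by
    intro v
    simp only [mulVec_sub, dotProduct_sub, sub_dotProduct]
    rw [hsym a v]
    ring
  have hr2 : 0 < vhat ⬝ᵥ (Q *ᵥ vhat) := by
    have := hQ.dotProduct_mulVec_pos hne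
    simpa using this
  set r2 : ℝ := vhat ⬝ᵥ (Q *ᵥ vhat) with hr2def
  set r : ℝ := Real.sqrt r2 with hrdef
  have hr : 0 < r := Real.sqrt_pos.mpr hr2
  have hrr : r * r = r2 := Real.mul_self_sqrt hr2.le
  clear_value r2 r
  set K : ℝ := vhat ⬝ᵥ (Q *ᵥ a) - lam * P vhat with hKdef
  clear_value K
  have hP0 : P 0 = 0 := by
    have := hhom 0 le_rfl 0
    simpa using this
  -- K ≥ r2/2 from minimality at 0
  have hK0 : r2 / 2 ≤ K := by
    have h0 := hmin 0
    rw [hexp vhat, hexp 0] at h0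
    simp only [hP0, zero_dotProduct, dotProduct_zero, mulVec_zero, mul_zero,
      add_zero, sub_zero] at h0
    rw [hKdef, hr2def]
    linarith [h0]
  -- value at the candidate maximizer
  have hPr : P (r⁻¹ • vhat) = r⁻¹ * P vhat := hhom r⁻¹ (inv_nonneg.mpr hr.le) vhat
  have hval : (r⁻¹ • vhat) ⬝ᵥ (Q *ᵥ a) - lam * P (r⁻¹ • vhat) = r⁻¹ * K := by
    rw [smul_dotProduct, hPr, smul_eq_mul, hKdef]
    ring
  constructor
  · have h1 : (r⁻¹ • vhat) ⬝ᵥ (Q *ᵥ (r⁻¹ • vhat)) = 1 := by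
      rw [mulVec_smul, smul_dotProduct, dotProduct_smul, smul_eq_mul, smul_eq_mul,
        ← hr2def, ← hrr]
      field_simp
    rw [h1]
  · intro v hv
    rw [hval]
    set t : ℝ := v ⬝ᵥ (Q *ᵥ a) - lam * P v with htdef
    clear_value t
    rcases le_or_gt t 0 with ht | ht
    · have : 0 < r⁻¹ * K := mul_pos (inv_pos.mpr hr) (by linarith)
      linarith
    · -- t > 0 : use minimality at t • v
      have hqv : 0 ≤ v ⬝ᵥ (Q *ᵥ v) := by
        have := hQ.posSemidef.dotProduct_mulVec_nonneg v
        simpa using this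
      have h1 := hmin (t • v)
      have hPt : P (t • v) = t * P v := hhom t ht.le v
      rw [hexp vhat, hexp (t • v)] at h1
      rw [smul_dotProduct, mulVec_smul, dotProduct_smul, smul_dotProduct, hPt,
        smul_eq_mul, smul_eq_mul, smul_eq_mul] at h1
      have hlin : t * (v ⬝ᵥ (Q *ᵥ a)) - t * (lam * P v) = t * t := by
        rw [htdef]; ring
      have ht2 : t * t ≤ 2 * K - r2 := by
        nlinarith [h1, hlin, hKdef, hr2def,
          mul_nonneg (sub_nonneg.mpr hv) (mul_nonneg ht.le ht.le)]
      have hK2 : t * t * r2 ≤ K * K := by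
        nlinarith [mul_le_mul_of_nonneg_right ht2 hr2.le, sq_nonneg (K - r2)]
      have htr : t * r ≤ K := by
        nlinarith [hK2, hrr, hK0, hr2, mul_pos ht hr]
      calc t = (r⁻¹ * r) * t := by field_simp
        _ = r⁻¹ * (t * r) := by ring
        _ ≤ r⁻¹ * K := mul_le_mul_of_nonneg_left htr (inv_nonneg.mpr hr.le)
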